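/- Let E be a Polish space and N ≥ 1. Let μ and ν be exchangeable probability distributions on E^N, let X^{1:N} ∼ μ and Y^{1:N} ∼ ν, and let η_x^N = N^{-1} Σ_{i=1}^N δ_{X^i} and η_y^N = N^{-1} Σ_{i=1}^N δ_{Y^i} be the corresponding random empirical measures. Then the infimum of P(η̃_x^N ≠ η̃_y^N) over all couplings (η̃_x^N, η̃_y^N) of (η_x^N, η_y^N) equals the infimum of P(X̃^{1:N} ≠ Ỹ^{1:N}) over all couplings (X̃^{1:N}, Ỹ^{1:N}) of (X^{1:N}, Y^{1:N}). -/

import Mathlib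

open MeasureTheory ProbabilityTheory ENNReal Filter

noncomputable section

/-- Total variation distance between measures. -/
def tvDist {E : Type*} [MeasurableSpace E] (μ ν : Measure E) : ℝ :=
  ⨆ A : {s : Set E // MeasurableSet s}, |(μ A.1).toReal - (ν A.1).toReal|

/-- Dobrushin contraction coefficient of a Markov kernel. -/
def dobrushin {E : Type*} [MeasurableSpace E] (M : Kernel E E) : ℝ :=
  ⨆ x, ⨆ y, tvDist (M x) (M y)

/-- Boltzmann–Gibbs update Ψ. -/
def BG {E : Type*} [MeasurableSpace E] (G : E → ℝ) (μ : Measure E) : Measure E :=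
  (∫⁻ x, ENNReal.ofReal (G x) ∂μ)⁻¹ • μ.withDensity fun x => ENNReal.ofReal (G x)

/-- One-step map `Φ_j(μ) = Ψ_{j-1}(μ) M_j` (for `j ≥ 1`). -/
def Phi {E : Type*} [MeasurableSpace E] (G : ℕ → E → ℝ) (M : ℕ → Kernel E E)
    (j : ℕ) (μ : Measure E) : Measure E :=
  (BG (G (j - 1)) μ).bind (M j)

/-- Iterated map `Φ_{0,n}`. -/
def PhiComp {E : Type*} [MeasurableSpace E] (G : ℕ → E → ℝ) (M : ℕ → Kernel E E) :
    ℕ → Measure E → Measure E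
  | 0 => id
  | n + 1 => fun μ => Phi G M (n + 1) (PhiComp G M n μ)

/-- Empirical measure of `N` particles. -/
def empMeas {E : Type*} [MeasurableSpace E] {N : ℕ} (x : Fin N → E) : Measure E :=
  ((N : ℝ≥0∞))⁻¹ • ∑ i, Measure.dirac (x i)

/-- Reference-perturbed empirical measure (conditional particle filter). -/
def cEmp {E : Type*} [MeasurableSpace E] {N : ℕ} (xstar : E) (x : Fin N → E) : Measure E :=
  ((N : ℝ≥0∞) + 1)⁻¹ • (Measure.dirac xstar + ∑ i, Measure.dirac (x i))

/-- Composition of kernels `𝐌_{n,n+k} = 𝐌_{n+k} ∘ ⋯ ∘ 𝐌_{n+1}`. -/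
def kernelComp {α : Type*} [MeasurableSpace α] (K : ℕ → Kernel α α) (n : ℕ) :
    ℕ → Kernel α α
  | 0 => Kernel.id
  | k + 1 => (K (n + k + 1)).comp (kernelComp K n k)

/-- Perturbed Boltzmann–Gibbs update `Ψ̂`. -/
def hatBG {E : Type*} [MeasurableSpace E] (G : E → ℝ) (xstar : E) (N : ℕ) (μ : Measure E) :
    Measure E :=
  BG G (((N : ℝ≥0∞) + 1)⁻¹ • Measure.dirac xstar + ((N : ℝ≥0∞) / ((N : ℝ≥0∞) + 1)) • μ)

/-- `L^p` norm of a real random variable. -/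
def lpN {Ω : Type*} [MeasurableSpace Ω] (P : Measure Ω) (p : ℝ) (X : Ω → ℝ) : ℝ :=
  (∫ ω, |X ω| ^ p ∂P) ^ (1 / p)

/-- Oscillation of a real-valued function. -/
def osc {E : Type*} (f : E → ℝ) : ℝ := ⨆ x, ⨆ y, (f x - f y)

/-- Squared Hellinger distance with respect to a dominating measure `lam`. -/
def hellingerSq {E : Type*} [MeasurableSpace E] (lam P Q : Measure E) : ℝ :=
  1 - (∫⁻ x, (P.rnDeriv lam x * Q.rnDeriv lam x) ^ (1 / 2 : ℝ) ∂lam).toReal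

/-- `Qaux G m lam g k = Q_{k,k+g}`, defined through the densities `m` of the kernels. -/
def Qaux {E : Type*} [MeasurableSpace E] (G : ℕ → E → ℝ) (m : ℕ → E → E → ℝ)
    (lam : Measure E) : ℕ → ℕ → (E → ℝ) → E → ℝ
  | 0, _, φ => φ
  | g + 1, k, φ => fun x => G k x * ∫ y, m (k + 1) x y * Qaux G m lam g (k + 1) φ y ∂lam

end

noncomputable section EmpAuxSection

namespace EmpAux

lemma empMeas_apply {E : Type*} [MeasurableSpace E] {N : ℕ} (x : Fin N → E) {s : Set E}
    (hs : MeasurableSet s) :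
    empMeas x s = (N : ℝ≥0∞)⁻¹ * ∑ i, s.indicator (1 : E → ℝ≥0∞) (x i) := by
  rw [empMeas, Measure.smul_apply, Measure.finset_sum_apply, smul_eq_mul]
  congr 1
  exact Finset.sum_congr rfl fun i _ => Measure.dirac_apply' _ hs

lemma measurable_empMeas {E : Type*} [MeasurableSpace E] {N : ℕ} :
    Measurable (fun x : Fin N → E => empMeas x) := by
  apply Measure.measurable_measure.2
  intro s hs
  simp_rw [fun x : Fin N → E => empMeas_apply x hs]
  exact Measurable.const_mul
    (Finset.measurable_sum _ fun i _ =>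
      (measurable_const.indicator hs).comp (measurable_pi_apply i)) _

lemma empMeas_univ_le {E : Type*} [MeasurableSpace E] {N : ℕ} (x : Fin N → E) :
    empMeas x Set.univ ≤ 1 := by
  rw [empMeas_apply x MeasurableSet.univ]
  simp only [Set.indicator_univ, Pi.one_apply, Finset.sum_const, Finset.card_univ,
    Fintype.card_fin, nsmul_eq_mul, mul_one]
  rcases Nat.eq_zero_or_pos N with h | h
  · subst h; simp
  · rw [ENNReal.inv_mul_cancel (by exact_mod_cast h.ne') (by simp)]

lemma empMeas_comp_perm {E : Type*} [MeasurableSpace E] {N : ℕ} (x : Fin N → E)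
    (σ : Equiv.Perm (Fin N)) : empMeas (x ∘ σ) = empMeas x := by
  ext s hs
  rw [empMeas_apply _ hs, empMeas_apply _ hs]
  congr 1
  exact Equiv.sum_comp σ fun i => s.indicator 1 (x i)

lemma map_empMeas {E F : Type*} [MeasurableSpace E] [MeasurableSpace F] {N : ℕ}
    {e : E → F} (he : Measurable e) (x : Fin N → E) :
    (empMeas x).map e = empMeas (e ∘ x) := by
  ext s hs
  rw [Measure.map_apply he hs, empMeas_apply _ (he hs), empMeas_apply _ hs]
  congr 1

/-! ### Uniform measure on the permutation orbit -/

def permUnif {E : Type*} [MeasurableSpace E] {N : ℕ} (x : Fin N → E) :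
    Measure (Fin N → E) :=
  ((N.factorial : ℝ≥0∞))⁻¹ • ∑ σ : Equiv.Perm (Fin N), Measure.dirac (x ∘ σ)

lemma measurable_comp_perm {E : Type*} [MeasurableSpace E] {N : ℕ} (σ : Equiv.Perm (Fin N)) :
    Measurable (fun x : Fin N → E => x ∘ σ) :=
  measurable_pi_lambda _ fun i => measurable_pi_apply (σ i)

lemma permUnif_apply {E : Type*} [MeasurableSpace E] {N : ℕ} (x : Fin N → E)
    {s : Set (Fin N → E)} (hs : MeasurableSet s) :
    permUnif x s
      = ((N.factorial : ℝ≥0∞))⁻¹ * ∑ σ : Equiv.Perm (Fin N), s.indicator 1 (x ∘ σ) := by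
  rw [permUnif, Measure.smul_apply, Measure.finset_sum_apply, smul_eq_mul]
  congr 1
  exact Finset.sum_congr rfl fun σ _ => Measure.dirac_apply' _ hs

lemma measurable_permUnif {E : Type*} [MeasurableSpace E] {N : ℕ} :
    Measurable (fun x : Fin N → E => permUnif x) := by
  apply Measure.measurable_measure.2
  intro s hs
  simp_rw [fun x : Fin N → E => permUnif_apply x hs]
  exact Measurable.const_mul
    (Finset.measurable_sum _ fun σ _ =>
      (measurable_const.indicator hs).comp (measurable_comp_perm σ)) _

lemma factorial_ne_zero' {N : ℕ} : ((N.factorial : ℝ≥0∞)) ≠ 0 := by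
  exact_mod_cast (Nat.factorial_pos N).ne'

instance isProbability_permUnif {E : Type*} [MeasurableSpace E] {N : ℕ} (x : Fin N → E) :
    IsProbabilityMeasure (permUnif x) := by
  constructor
  rw [permUnif_apply x MeasurableSet.univ]
  simp only [Set.indicator_univ, Pi.one_apply, Finset.sum_const, Finset.card_univ,
    Fintype.card_perm, Fintype.card_fin, nsmul_eq_mul, mul_one]
  exact ENNReal.inv_mul_cancel factorial_ne_zero' (by simp)

lemma permUnif_comp_perm {E : Type*} [MeasurableSpace E] {N : ℕ} (x : Fin N → E)
    (σ : Equiv.Perm (Fin N)) : permUnif (x ∘ σ) = permUnif x := by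
  rw [permUnif, permUnif]
  congr 1
  refine Fintype.sum_equiv (Equiv.mulLeft σ) _ _ fun τ => ?_
  congr 1

lemma lintegral_permUnif {E : Type*} [MeasurableSpace E] {N : ℕ} {μ : Measure (Fin N → E)}
    (hμ : ∀ σ : Equiv.Perm (Fin N), μ.map (fun x => x ∘ σ) = μ)
    {s : Set (Fin N → E)} (hs : MeasurableSet s) :
    ∫⁻ x, permUnif x s ∂μ = μ s := by
  simp_rw [fun x : Fin N → E => permUnif_apply x hs]
  have hmeas : ∀ σ : Equiv.Perm (Fin N),
      Measurable fun x : Fin N → E => s.indicator (1 : (Fin N → E) → ℝ≥0∞) (x ∘ σ) :=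
    fun σ => (measurable_const.indicator hs).comp (measurable_comp_perm σ)
  rw [lintegral_const_mul _ (Finset.measurable_sum _ fun σ _ => hmeas σ)]
  rw [lintegral_finset_sum _ fun σ _ => hmeas σ]
  have h1 : ∀ σ : Equiv.Perm (Fin N),
      ∫⁻ x, s.indicator (1 : (Fin N → E) → ℝ≥0∞) (x ∘ σ) ∂μ = μ s := by
    intro σ
    have heq : (fun x : Fin N → E => s.indicator (1 : (Fin N → E) → ℝ≥0∞) (x ∘ σ))
        = ((fun x : Fin N → E => x ∘ σ) ⁻¹' s).indicator 1 := by
      funext x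
      rfl
    rw [heq, lintegral_indicator_one ((measurable_comp_perm σ) hs)]
    rw [← Measure.map_apply (measurable_comp_perm σ) hs, hμ σ]
  simp_rw [h1]
  simp only [Finset.sum_const, Finset.card_univ, Fintype.card_perm, Fintype.card_fin,
    nsmul_eq_mul]
  rw [← mul_assoc, ENNReal.inv_mul_cancel factorial_ne_zero' (by simp), one_mul]

/-! ### Quantiles -/

def quant (r : ℝ≥0∞) (m : Measure ℝ) : ℝ := sInf {t : ℝ | r ≤ m (Set.Iic t)}

lemma quant_upward {r : ℝ≥0∞} {m : Measure ℝ} {t t' : ℝ}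
    (h : r ≤ m (Set.Iic t)) (htt' : t ≤ t') : r ≤ m (Set.Iic t') :=
  h.trans (measure_mono (Set.Iic_subset_Iic.2 htt'))

lemma quant_lt_iff {r : ℝ≥0∞} {m : Measure ℝ} {c : ℝ} :
    quant r m < c ↔
      ((∃ q : ℚ, r ≤ m (Set.Iic (q : ℝ)) ∧ (q : ℝ) < c)
          ∧ (∃ q : ℚ, ¬ r ≤ m (Set.Iic (q : ℝ))))
        ∨ ((¬ ((∃ q : ℚ, r ≤ m (Set.Iic (q : ℝ)))
            ∧ (∃ q : ℚ, ¬ r ≤ m (Set.Iic (q : ℝ))))) ∧ 0 < c) := by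
  set S : Set ℝ := {t : ℝ | r ≤ m (Set.Iic t)} with hS
  by_cases hA : ∃ q : ℚ, r ≤ m (Set.Iic (q : ℝ))
  · by_cases hB : ∃ q : ℚ, ¬ r ≤ m (Set.Iic (q : ℝ))
    · obtain ⟨qa, hqa⟩ := hA
      obtain ⟨qb, hqb⟩ := hB
      have hne : S.Nonempty := ⟨(qa : ℝ), hqa⟩
      have hbdd : BddBelow S := by
        refine ⟨(qb : ℝ), fun t ht => ?_⟩
        by_contra hlt
        push_neg at hlt
        exact hqb (quant_upward ht hlt.le)
      constructor
      · intro h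
        obtain ⟨t, htS, htc⟩ := (csInf_lt_iff hbdd hne).1 h
        obtain ⟨q, hq1, hq2⟩ := exists_rat_btwn htc
        exact Or.inl ⟨⟨q, quant_upward htS hq1.le, hq2⟩, ⟨qb, hqb⟩⟩
      · rintro (⟨⟨q, hq, hqc⟩, -⟩ | ⟨hn, -⟩)
        · exact lt_of_le_of_lt (csInf_le hbdd hq) hqc
        · exact absurd ⟨⟨qa, hqa⟩, ⟨qb, hqb⟩⟩ hn
    · push_neg at hB
      have hall : ∀ t : ℝ, t ∈ S := by
        intro t
        obtain ⟨q, hq⟩ := exists_rat_lt t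
        exact quant_upward (hB q) hq.le
      have hnb : ¬ BddBelow S := by
        rintro ⟨b, hb⟩
        have := hb (hall (b - 1))
        linarith
      have h0 : quant r m = 0 := by
        rw [quant, ← hS, csInf_of_not_bddBelow hnb, Real.sInf_empty]
      rw [h0]
      constructor
      · intro h
        exact Or.inr ⟨fun hc => hc.2.elim fun q hq => hq (hB q), h⟩
      · rintro (⟨-, ⟨q, hq⟩⟩ | ⟨-, h⟩)
        · exact absurd (hB q) hq
        · exact h
  · have hemp : S = ∅ := by
      refine Set.eq_empty_iff_forall_notMem.2 fun t ht => ?_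
      obtain ⟨q, hq⟩ := exists_rat_gt t
      exact hA ⟨q, quant_upward ht hq.le⟩
    have h0 : quant r m = 0 := by rw [quant, ← hS, hemp, Real.sInf_empty]
    rw [h0]
    constructor
    · intro h
      exact Or.inr ⟨fun hc => hA hc.1, h⟩
    · rintro (⟨⟨q, hq, -⟩, -⟩ | ⟨-, h⟩)
      · exact absurd ⟨q, hq⟩ hA
      · exact h

lemma measurable_quant (r : ℝ≥0∞) : Measurable (quant r) := by
  apply measurable_of_Iio
  intro c
  have hset : quant r ⁻¹' (Set.Iio c) =
      (({m : Measure ℝ | ∃ q : ℚ, r ≤ m (Set.Iic (q : ℝ)) ∧ (q : ℝ) < c}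
          ∩ {m : Measure ℝ | ∃ q : ℚ, ¬ r ≤ m (Set.Iic (q : ℝ))}))
        ∪ ((({m : Measure ℝ | ∃ q : ℚ, r ≤ m (Set.Iic (q : ℝ))}
            ∩ {m : Measure ℝ | ∃ q : ℚ, ¬ r ≤ m (Set.Iic (q : ℝ))})ᶜ)
          ∩ {_m : Measure ℝ | 0 < c}) := by
    ext m
    simp only [Set.mem_preimage, Set.mem_Iio, Set.mem_union, Set.mem_inter_iff,
      Set.mem_setOf_eq, Set.mem_compl_iff]
    exact quant_lt_iff
  rw [hset]
  have hbase : ∀ q : ℚ, MeasurableSet {m : Measure ℝ | r ≤ m (Set.Iic (q : ℝ))} := fun q =>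
    measurableSet_le measurable_const (Measure.measurable_coe measurableSet_Iic)
  refine MeasurableSet.union ?_ ?_
  · refine MeasurableSet.inter ?_ ?_
    · rw [Set.setOf_exists]
      exact MeasurableSet.iUnion fun q => by
        rw [Set.setOf_and]
        exact (hbase q).inter (MeasurableSet.const _)
    · rw [Set.setOf_exists]
      exact MeasurableSet.iUnion fun q => (hbase q).compl
  · refine MeasurableSet.inter (MeasurableSet.compl ?_) (MeasurableSet.const _)
    refine MeasurableSet.inter ?_ ?_
    · rw [Set.setOf_exists]; exact MeasurableSet.iUnion fun q => hbase q
    · rw [Set.setOf_exists]; exact MeasurableSet.iUnion fun q => (hbase q).compl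

lemma quant_empMeas {N : ℕ} (y : Fin N → ℝ) (hy : Monotone y) (k : Fin N) :
    quant (((k : ℕ) + 1 : ℕ) / (N : ℝ≥0∞)) (empMeas y) = y k := by
  have hN0 : (N : ℝ≥0∞) ≠ 0 := Nat.cast_ne_zero.2 k.pos.ne'
  have hNt : (N : ℝ≥0∞) ≠ ⊤ := by simp
  have hval : ∀ t : ℝ, empMeas y (Set.Iic t)
      = ((Finset.univ.filter fun i => y i ≤ t).card : ℝ≥0∞) / (N : ℝ≥0∞) := by
    intro t
    rw [empMeas_apply y measurableSet_Iic]
    have : ∀ i, (Set.Iic t).indicator (1 : ℝ → ℝ≥0∞) (y i)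
        = if y i ≤ t then 1 else 0 := fun i => by simp [Set.indicator_apply]
    simp_rw [this]
    rw [Finset.sum_boole, mul_comm, div_eq_mul_inv]
  have key : ∀ t : ℝ,
      (((k : ℕ) + 1 : ℕ) : ℝ≥0∞) / (N : ℝ≥0∞) ≤ empMeas y (Set.Iic t) ↔ y k ≤ t := by
    intro t
    rw [hval t]
    have hcast : ((((k : ℕ) + 1 : ℕ) : ℝ≥0∞) / (N : ℝ≥0∞)
          ≤ ((Finset.univ.filter fun i => y i ≤ t).card : ℝ≥0∞) / (N : ℝ≥0∞))
        ↔ (k : ℕ) + 1 ≤ (Finset.univ.filter fun i => y i ≤ t).card := by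
      constructor
      · intro h
        have := mul_le_mul_left h (N : ℝ≥0∞)
        rw [ENNReal.div_mul_cancel hN0 hNt, ENNReal.div_mul_cancel hN0 hNt] at this
        exact_mod_cast this
      · intro h
        exact ENNReal.div_le_div_right (by exact_mod_cast h) _
    rw [hcast]
    constructor
    · intro hcard
      by_contra hlt
      push_neg at hlt
      have hsub : (Finset.univ.filter fun i => y i ≤ t) ⊆ Finset.Iio k := by
        intro i hi
        rw [Finset.mem_filter] at hi
        rw [Finset.mem_Iio]
        by_contra hki
        push_neg at hki
        exact absurd (lt_of_le_of_lt (hy hki |>.trans hi.2) hlt) (lt_irrefl _)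
      have hc2 := Finset.card_le_card hsub
      rw [Fin.card_Iio] at hc2
      omega
    · intro hyk
      have hsub : Finset.Iic k ⊆ (Finset.univ.filter fun i => y i ≤ t) := by
        intro i hi
        rw [Finset.mem_Iic] at hi
        exact Finset.mem_filter.2 ⟨Finset.mem_univ _, (hy hi).trans hyk⟩
      have := Finset.card_le_card hsub
      rw [Fin.card_Iic] at this
      omega
  have hSet : {t : ℝ | (((k : ℕ) + 1 : ℕ) : ℝ≥0∞) / (N : ℝ≥0∞) ≤ empMeas y (Set.Iic t)}
      = Set.Ici (y k) := Set.ext fun t => (key t).trans Set.mem_Ici.symm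
  rw [quant, hSet, csInf_Ici]

/-! ### A measurable section of the empirical-measure map -/

lemma measurable_invFun {E : Type*} [MeasurableSpace E] [Nonempty E] {e : E → ℝ}
    (he : MeasurableEmbedding e) : Measurable (Function.invFun e) := by
  classical
  intro s hs
  by_cases hc : Classical.choice ‹Nonempty E› ∈ s
  · have hpre : Function.invFun e ⁻¹' s = (e '' s) ∪ (Set.range e)ᶜ := by
      ext y
      simp only [Set.mem_preimage, Set.mem_union, Set.mem_image, Set.mem_compl_iff,
        Set.mem_range]
      constructor
      · intro h
        by_cases hy : ∃ a, e a = y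
        · exact Or.inl ⟨Function.invFun e y, h, Function.invFun_eq hy⟩
        · exact Or.inr hy
      · rintro (⟨a, ha, rfl⟩ | hy)
        · rwa [Function.leftInverse_invFun he.injective a]
        · rw [Function.invFun_neg hy]
          exact hc
    rw [hpre]
    exact (he.measurableSet_image.2 hs).union he.measurableSet_range.compl
  · have hpre : Function.invFun e ⁻¹' s = e '' s := by
      ext y
      constructor
      · intro h
        by_cases hy : ∃ a, e a = y
        · exact ⟨Function.invFun e y, h, Function.invFun_eq hy⟩
        · rw [Set.mem_preimage, Function.invFun_neg hy] at h
          exact absurd h hc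
      · rintro ⟨a, ha, rfl⟩
        rw [Set.mem_preimage, Function.leftInverse_invFun he.injective a]
        exact ha
    rw [hpre]
    exact he.measurableSet_image.2 hs

def sortRep {E : Type*} [MeasurableSpace E] (e : E → ℝ) (N : ℕ) [Nonempty E]
    (m : Measure E) : Fin N → E :=
  fun k => Function.invFun e (quant (((k : ℕ) + 1 : ℕ) / (N : ℝ≥0∞)) (m.map e))

lemma measurable_sortRep {E : Type*} [MeasurableSpace E] [Nonempty E] {e : E → ℝ}
    (he : MeasurableEmbedding e) (N : ℕ) : Measurable (sortRep e N) := by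
  refine measurable_pi_lambda _ fun k => ?_
  exact (measurable_invFun he).comp
    ((measurable_quant _).comp (Measure.measurable_map e he.measurable))

lemma sortRep_empMeas {E : Type*} [MeasurableSpace E] [Nonempty E] {e : E → ℝ}
    (he : MeasurableEmbedding e) {N : ℕ} (x : Fin N → E) :
    ∃ σ : Equiv.Perm (Fin N), sortRep e N (empMeas x) = x ∘ σ := by
  classical
  refine ⟨Tuple.sort (e ∘ x), funext fun k => ?_⟩
  have h1 : (empMeas x).map e = empMeas ((e ∘ x) ∘ Tuple.sort (e ∘ x)) := by
    rw [map_empMeas he.measurable, empMeas_comp_perm]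
  have h2 : quant (((k : ℕ) + 1 : ℕ) / (N : ℝ≥0∞)) (empMeas ((e ∘ x) ∘ Tuple.sort (e ∘ x)))
      = ((e ∘ x) ∘ Tuple.sort (e ∘ x)) k :=
    quant_empMeas _ (Tuple.monotone_sort (e ∘ x)) k
  show Function.invFun e (quant _ ((empMeas x).map e)) = _
  rw [h1, h2]
  exact Function.leftInverse_invFun he.injective _

/-! ### The diagonal-detecting measurable set -/

def Dset {E : Type*} [MeasurableSpace E] (e : E → ℝ) : Set (Measure E × Measure E) :=
  {p | p.1 Set.univ ≤ 1 ∧ p.1 Set.univ = p.2 Set.univ ∧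
    ∀ q : ℚ, p.1 (e ⁻¹' Set.Iic (q : ℝ)) = p.2 (e ⁻¹' Set.Iic (q : ℝ))}

lemma measurableSet_Dset {E : Type*} [MeasurableSpace E] {e : E → ℝ} (he : Measurable e) :
    MeasurableSet (Dset e) := by
  have h1 : MeasurableSet {p : Measure E × Measure E | p.1 Set.univ ≤ 1} :=
    measurableSet_le ((Measure.measurable_coe MeasurableSet.univ).comp measurable_fst)
      measurable_const
  have heqset : ∀ (t : Set E), MeasurableSet t →
      MeasurableSet {p : Measure E × Measure E | p.1 t = p.2 t} := by
    intro t ht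
    have hf : Measurable fun p : Measure E × Measure E => p.1 t :=
      (Measure.measurable_coe ht).comp measurable_fst
    have hg : Measurable fun p : Measure E × Measure E => p.2 t :=
      (Measure.measurable_coe ht).comp measurable_snd
    have : {p : Measure E × Measure E | p.1 t = p.2 t}
        = {p | p.1 t ≤ p.2 t} ∩ {p | p.2 t ≤ p.1 t} := by
      ext p
      simp only [Set.mem_setOf_eq, Set.mem_inter_iff]
      exact le_antisymm_iff
    rw [this]
    exact (measurableSet_le hf hg).inter (measurableSet_le hg hf)
  have h2 : MeasurableSet {p : Measure E × Measure E | p.1 Set.univ = p.2 Set.univ} :=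
    heqset _ MeasurableSet.univ
  have h3 : MeasurableSet {p : Measure E × Measure E |
      ∀ q : ℚ, p.1 (e ⁻¹' Set.Iic (q : ℝ)) = p.2 (e ⁻¹' Set.Iic (q : ℝ))} := by
    rw [Set.setOf_forall]
    exact MeasurableSet.iInter fun q => heqset _ (he measurableSet_Iic)
  have hD : Dset e = {p : Measure E × Measure E | p.1 Set.univ ≤ 1}
      ∩ ({p : Measure E × Measure E | p.1 Set.univ = p.2 Set.univ}
        ∩ {p : Measure E × Measure E |
          ∀ q : ℚ, p.1 (e ⁻¹' Set.Iic (q : ℝ)) = p.2 (e ⁻¹' Set.Iic (q : ℝ))}) := by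
    ext p
    simp only [Dset, Set.mem_setOf_eq, Set.mem_inter_iff]
  rw [hD]
  exact h1.inter (h2.inter h3)

lemma Dset_eq {E : Type*} [MeasurableSpace E] {e : E → ℝ} (he : MeasurableEmbedding e)
    {p : Measure E × Measure E} (hp : p ∈ Dset e) : p.1 = p.2 := by
  obtain ⟨hmass, huniv, hq⟩ := hp
  haveI : IsFiniteMeasure p.1 := ⟨lt_of_le_of_lt hmass one_lt_top⟩
  haveI : IsFiniteMeasure (p.1.map e) := by
    constructor
    rw [Measure.map_apply he.measurable MeasurableSet.univ]
    exact lt_of_le_of_lt (measure_mono (Set.subset_univ _))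
      (lt_of_le_of_lt hmass one_lt_top)
  have hmap : p.1.map e = p.2.map e := by
    refine ext_of_generate_finite _ ?_ Real.isPiSystem_Iic_rat ?_ ?_
    · rw [BorelSpace.measurable_eq (α := ℝ)]
      exact Real.borel_eq_generateFrom_Iic_rat
    · intro s hs
      simp only [Set.mem_iUnion, Set.mem_singleton_iff] at hs
      obtain ⟨q, rfl⟩ := hs
      rw [Measure.map_apply he.measurable measurableSet_Iic,
        Measure.map_apply he.measurable measurableSet_Iic]
      exact hq q
    · rw [Measure.map_apply he.measurable MeasurableSet.univ,
        Measure.map_apply he.measurable MeasurableSet.univ]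
      simpa using huniv
  ext s hs
  have h1 : p.1 s = p.1.map e (e '' s) := by
    rw [Measure.map_apply he.measurable (he.measurableSet_image.2 hs),
      Set.preimage_image_eq s he.injective]
  have h2 : p.2 s = p.2.map e (e '' s) := by
    rw [Measure.map_apply he.measurable (he.measurableSet_image.2 hs),
      Set.preimage_image_eq s he.injective]
  rw [h1, h2, hmap]

lemma Dset_self {E : Type*} [MeasurableSpace E] {e : E → ℝ} {m : Measure E}
    (hm : m Set.univ ≤ 1) : (m, m) ∈ Dset e :=
  ⟨hm, rfl, fun _ => rfl⟩

end EmpAux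

end EmpAuxSection

/-- Lemma `tvequality`: for exchangeable laws on `E^N` over a Polish space,
the minimal probability of the empirical measures differing over couplings equals
the minimal probability of the particle vectors differing over couplings. -/
theorem empirical_coupling_inf_eq {E : Type*} [MeasurableSpace E]
    [TopologicalSpace E] [PolishSpace E] [BorelSpace E]
    (N : ℕ) (μ ν : Measure (Fin N → E))
    [IsProbabilityMeasure μ] [IsProbabilityMeasure ν]
    (hμ : ∀ σ : Equiv.Perm (Fin N), μ.map (fun x => x ∘ σ) = μ)
    (hν : ∀ σ : Equiv.Perm (Fin N), ν.map (fun x => x ∘ σ) = ν) :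
    sInf {r : ℝ | ∃ γ : Measure (Measure E × Measure E),
        γ.map Prod.fst = μ.map (fun x => empMeas x) ∧
        γ.map Prod.snd = ν.map (fun x => empMeas x) ∧
        r = (γ {q | q.1 ≠ q.2}).toReal} =
      sInf {r : ℝ | ∃ γ : Measure ((Fin N → E) × (Fin N → E)),
        γ.map Prod.fst = μ ∧
        γ.map Prod.snd = ν ∧
        r = (γ {q | q.1 ≠ q.2}).toReal} := by
  classical
  have hlb1 : ∀ r ∈ {r : ℝ | ∃ γ : Measure (Measure E × Measure E),
      γ.map Prod.fst = μ.map (fun x => empMeas x) ∧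
      γ.map Prod.snd = ν.map (fun x => empMeas x) ∧
      r = (γ {q | q.1 ≠ q.2}).toReal}, (0:ℝ) ≤ r := by
    rintro r ⟨γ, -, -, rfl⟩
    exact ENNReal.toReal_nonneg
  have hlb2 : ∀ r ∈ {r : ℝ | ∃ γ : Measure ((Fin N → E) × (Fin N → E)),
      γ.map Prod.fst = μ ∧ γ.map Prod.snd = ν ∧
      r = (γ {q | q.1 ≠ q.2}).toReal}, (0:ℝ) ≤ r := by
    rintro r ⟨γ, -, -, rfl⟩
    exact ENNReal.toReal_nonneg
  have hbdd1 : BddBelow {r : ℝ | ∃ γ : Measure (Measure E × Measure E),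
      γ.map Prod.fst = μ.map (fun x => empMeas x) ∧
      γ.map Prod.snd = ν.map (fun x => empMeas x) ∧
      r = (γ {q | q.1 ≠ q.2}).toReal} := ⟨0, hlb1⟩
  have hbdd2 : BddBelow {r : ℝ | ∃ γ : Measure ((Fin N → E) × (Fin N → E)),
      γ.map Prod.fst = μ ∧ γ.map Prod.snd = ν ∧
      r = (γ {q | q.1 ≠ q.2}).toReal} := ⟨0, hlb2⟩
  haveI hPμe : IsProbabilityMeasure (μ.map (fun x : Fin N → E => empMeas x)) :=
    Measure.isProbabilityMeasure_map EmpAux.measurable_empMeas.aemeasurable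
  haveI hPνe : IsProbabilityMeasure (ν.map (fun x : Fin N → E => empMeas x)) :=
    Measure.isProbabilityMeasure_map EmpAux.measurable_empMeas.aemeasurable
  have hne1 : Set.Nonempty {r : ℝ | ∃ γ : Measure (Measure E × Measure E),
      γ.map Prod.fst = μ.map (fun x => empMeas x) ∧
      γ.map Prod.snd = ν.map (fun x => empMeas x) ∧
      r = (γ {q | q.1 ≠ q.2}).toReal} := by
    refine ⟨_, (μ.map (fun x => empMeas x)).prod (ν.map (fun x => empMeas x)), ?_, ?_, rfl⟩
    · exact Measure.fst_prod
    · exact Measure.snd_prod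
  have hne2 : Set.Nonempty {r : ℝ | ∃ γ : Measure ((Fin N → E) × (Fin N → E)),
      γ.map Prod.fst = μ ∧ γ.map Prod.snd = ν ∧
      r = (γ {q | q.1 ≠ q.2}).toReal} := by
    refine ⟨_, μ.prod ν, ?_, ?_, rfl⟩
    · exact Measure.fst_prod
    · exact Measure.snd_prod
  rcases isEmpty_or_nonempty E with hE | hE
  · -- `E` is empty
    rcases Nat.eq_zero_or_pos N with rfl | hN
    · -- `N = 0`: everything is trivial
      haveI hsub : Subsingleton (Fin 0 → E) := ⟨fun a b => funext fun i => i.elim0⟩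
      haveI hsubM : Subsingleton (Measure E) := ⟨fun a b => by
        ext s _
        rw [Set.eq_empty_of_isEmpty s]
        simp⟩
      have hμν : μ = ν := by
        ext s _
        rcases Set.eq_empty_or_nonempty s with rfl | ⟨x, hx⟩
        · simp
        · have hsu : s = Set.univ := Set.eq_univ_of_forall fun y => by
            rwa [Subsingleton.elim y x]
          rw [hsu]
          simp
      have h01 : (0:ℝ) ∈ {r : ℝ | ∃ γ : Measure (Measure E × Measure E),
          γ.map Prod.fst = μ.map (fun x => empMeas x) ∧
          γ.map Prod.snd = ν.map (fun x => empMeas x) ∧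
          r = (γ {q | q.1 ≠ q.2}).toReal} := by
        have hdgm : Measurable (fun m : Measure E => (m, m)) :=
          measurable_id.prodMk measurable_id
        refine ⟨(μ.map (fun x => empMeas x)).map (fun m => (m, m)), ?_, ?_, ?_⟩
        · rw [Measure.map_map measurable_fst hdgm]
          have : (Prod.fst ∘ fun m : Measure E => (m, m)) = id := rfl
          rw [this, Measure.map_id]
        · rw [Measure.map_map measurable_snd hdgm]
          have : (Prod.snd ∘ fun m : Measure E => (m, m)) = id := rfl
          rw [this, Measure.map_id, hμν]
        · have hset : {q : Measure E × Measure E | q.1 ≠ q.2} = ∅ :=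
            Set.eq_empty_iff_forall_notMem.2 fun q hq => hq (Subsingleton.elim _ _)
          rw [hset]
          simp
      have h02 : (0:ℝ) ∈ {r : ℝ | ∃ γ : Measure ((Fin 0 → E) × (Fin 0 → E)),
          γ.map Prod.fst = μ ∧ γ.map Prod.snd = ν ∧
          r = (γ {q | q.1 ≠ q.2}).toReal} := by
        have hdgm2 : Measurable (fun x : Fin 0 → E => (x, x)) :=
          measurable_id.prodMk measurable_id
        refine ⟨μ.map (fun x => (x, x)), ?_, ?_, ?_⟩
        · rw [Measure.map_map measurable_fst hdgm2]
          have : (Prod.fst ∘ fun x : Fin 0 → E => (x, x)) = id := rfl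
          rw [this, Measure.map_id]
        · rw [Measure.map_map measurable_snd hdgm2]
          have : (Prod.snd ∘ fun x : Fin 0 → E => (x, x)) = id := rfl
          rw [this, Measure.map_id, hμν]
        · have hset : {q : (Fin 0 → E) × (Fin 0 → E) | q.1 ≠ q.2} = ∅ :=
            Set.eq_empty_iff_forall_notMem.2 fun q hq => hq (Subsingleton.elim _ _)
          rw [hset]
          simp
      rw [le_antisymm (csInf_le hbdd1 h01) (le_csInf ⟨0, h01⟩ hlb1),
        le_antisymm (csInf_le hbdd2 h02) (le_csInf ⟨0, h02⟩ hlb2)]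
    · -- `N ≥ 1`: there is no probability measure on the empty space
      exfalso
      have h1 : μ Set.univ = 1 := measure_univ
      haveI : IsEmpty (Fin N → E) := ⟨fun f => hE.false (f ⟨0, hN⟩)⟩
      rw [Set.eq_empty_of_isEmpty (Set.univ : Set (Fin N → E))] at h1
      simp at h1
  -- main case: `E` nonempty
  obtain ⟨e, he⟩ := exists_measurableEmbedding_real E
  apply le_antisymm
  · -- easy direction: push a coupling of the laws forward to the empirical measures
    refine le_csInf hne2 ?_
    rintro r ⟨γ, h1, h2, rfl⟩
    haveI hγP : IsProbabilityMeasure γ := by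
      constructor
      rw [show (Set.univ : Set ((Fin N → E) × (Fin N → E))) = Prod.fst ⁻¹' Set.univ from
          (Set.preimage_univ).symm,
        ← Measure.map_apply measurable_fst MeasurableSet.univ, h1]
      exact measure_univ
    have hgm : Measurable (fun p : (Fin N → E) × (Fin N → E) =>
        (empMeas p.1, empMeas p.2)) :=
      (EmpAux.measurable_empMeas.comp measurable_fst).prodMk
        (EmpAux.measurable_empMeas.comp measurable_snd)
    refine csInf_le_of_le hbdd1
      ⟨γ.map (fun p => (empMeas p.1, empMeas p.2)), ?_, ?_, rfl⟩ ?_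
    · rw [Measure.map_map measurable_fst hgm]
      have : (Prod.fst ∘ fun p : (Fin N → E) × (Fin N → E) => (empMeas p.1, empMeas p.2))
          = (fun x => empMeas x) ∘ Prod.fst := rfl
      rw [this, ← Measure.map_map EmpAux.measurable_empMeas measurable_fst, h1]
    · rw [Measure.map_map measurable_snd hgm]
      have : (Prod.snd ∘ fun p : (Fin N → E) × (Fin N → E) => (empMeas p.1, empMeas p.2))
          = (fun x => empMeas x) ∘ Prod.snd := rfl
      rw [this, ← Measure.map_map EmpAux.measurable_empMeas measurable_snd, h2]
    · refine ENNReal.toReal_mono (measure_ne_top γ _) ?_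
      calc γ.map (fun p => (empMeas p.1, empMeas p.2)) {q : Measure E × Measure E | q.1 ≠ q.2}
          ≤ γ.map (fun p => (empMeas p.1, empMeas p.2)) (EmpAux.Dset e)ᶜ := by
            refine measure_mono fun q hq => ?_
            simp only [Set.mem_setOf_eq] at hq
            intro hqD
            exact hq (EmpAux.Dset_eq he hqD)
        _ = γ ((fun p : (Fin N → E) × (Fin N → E) => (empMeas p.1, empMeas p.2)) ⁻¹'
              (EmpAux.Dset e)ᶜ) :=
            Measure.map_apply hgm (EmpAux.measurableSet_Dset he.measurable).compl
        _ ≤ γ {q | q.1 ≠ q.2} := by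
            refine measure_mono fun p hp => ?_
            simp only [Set.mem_preimage, Set.mem_compl_iff] at hp
            simp only [Set.mem_setOf_eq]
            intro hpe
            apply hp
            have hee : empMeas p.1 = empMeas p.2 := by rw [hpe]
            rw [show ((empMeas p.1, empMeas p.2)) = ((empMeas p.2, empMeas p.2)) by
              rw [hee]]
            exact EmpAux.Dset_self (EmpAux.empMeas_univ_le _)
  · -- hard direction: lift a coupling of the empirical laws
    refine le_csInf hne1 ?_
    rintro r ⟨γ, h1, h2, rfl⟩
    haveI hγP : IsProbabilityMeasure γ := by
      constructor
      rw [show (Set.univ : Set (Measure E × Measure E)) = Prod.fst ⁻¹' Set.univ from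
          (Set.preimage_univ).symm,
        ← Measure.map_apply measurable_fst MeasurableSet.univ, h1]
      exact measure_univ
    set u : Measure E → Measure (Fin N → E) :=
      fun m => EmpAux.permUnif (EmpAux.sortRep e N m) with hudef
    have hu : Measurable u :=
      EmpAux.measurable_permUnif.comp (EmpAux.measurable_sortRep he N)
    let κ₁ : Kernel (Measure E × Measure E) (Fin N → E) :=
      ⟨fun p => u p.1, hu.comp measurable_fst⟩
    let κ₂ : Kernel (Measure E × Measure E) (Fin N → E) :=
      ⟨fun p => u p.2, hu.comp measurable_snd⟩
    haveI : IsMarkovKernel κ₁ := ⟨fun p => EmpAux.isProbability_permUnif _⟩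
    haveI : IsMarkovKernel κ₂ := ⟨fun p => EmpAux.isProbability_permUnif _⟩
    set C : Set (Measure E × Measure E) :=
      {p | EmpAux.sortRep e N p.1 = EmpAux.sortRep e N p.2} with hCdef
    have hC : MeasurableSet C := by
      have hCeq : C = ⋂ k : Fin N, {p : Measure E × Measure E |
          e (EmpAux.sortRep e N p.1 k) = e (EmpAux.sortRep e N p.2 k)} := by
        ext p
        simp only [hCdef, Set.mem_iInter, Set.mem_setOf_eq]
        constructor
        · intro h k
          rw [h]
        · intro h
          funext k
          exact he.injective (h k)
      rw [hCeq]
      refine MeasurableSet.iInter fun k => ?_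
      have hf : Measurable fun p : Measure E × Measure E => e (EmpAux.sortRep e N p.1 k) :=
        he.measurable.comp (((measurable_pi_apply k).comp
          (EmpAux.measurable_sortRep he N)).comp measurable_fst)
      have hg : Measurable fun p : Measure E × Measure E => e (EmpAux.sortRep e N p.2 k) :=
        he.measurable.comp (((measurable_pi_apply k).comp
          (EmpAux.measurable_sortRep he N)).comp measurable_snd)
      have heq2 : {p : Measure E × Measure E |
          e (EmpAux.sortRep e N p.1 k) = e (EmpAux.sortRep e N p.2 k)}
          = {p | e (EmpAux.sortRep e N p.1 k) ≤ e (EmpAux.sortRep e N p.2 k)}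
            ∩ {p | e (EmpAux.sortRep e N p.2 k) ≤ e (EmpAux.sortRep e N p.1 k)} := by
        ext p
        simp only [Set.mem_setOf_eq, Set.mem_inter_iff]
        exact le_antisymm_iff
      rw [heq2]
      exact (measurableSet_le hf hg).inter (measurableSet_le hg hf)
    set dmap : (Fin N → E) → (Fin N → E) × (Fin N → E) := fun x => (x, x) with hdmapdef
    have hdmap : Measurable dmap := measurable_id.prodMk measurable_id
    set K : Kernel (Measure E × Measure E) ((Fin N → E) × (Fin N → E)) :=
      Kernel.piecewise hC (Kernel.map κ₁ dmap) (κ₁ ×ₖ κ₂) with hKdef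
    haveI : IsMarkovKernel (Kernel.map κ₁ dmap) := Kernel.IsMarkovKernel.map κ₁ hdmap
    haveI hKMarkov : IsMarkovKernel K := by
      rw [hKdef]
      infer_instance
    have hKfst : ∀ (p : Measure E × Measure E) (s : Set (Fin N → E)), MeasurableSet s →
        K p (Prod.fst ⁻¹' s) = u p.1 s := by
      intro p s hs
      rw [hKdef, Kernel.piecewise_apply]
      by_cases hp : p ∈ C
      · rw [if_pos hp, Kernel.map_apply κ₁ hdmap, Measure.map_apply hdmap (measurable_fst hs)]
        have hpre : dmap ⁻¹' (Prod.fst ⁻¹' s) = s := by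
          ext x
          simp [hdmapdef]
        rw [hpre]
        rfl
      · rw [if_neg hp, Kernel.prod_apply, ← Set.prod_univ, Measure.prod_prod]
        have h2' : (κ₂ p) Set.univ = 1 := measure_univ
        rw [h2', mul_one]
        rfl
    have hKsnd : ∀ (p : Measure E × Measure E) (s : Set (Fin N → E)), MeasurableSet s →
        K p (Prod.snd ⁻¹' s) = u p.2 s := by
      intro p s hs
      rw [hKdef, Kernel.piecewise_apply]
      by_cases hp : p ∈ C
      · rw [if_pos hp, Kernel.map_apply κ₁ hdmap, Measure.map_apply hdmap (measurable_snd hs)]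
        have hpre : dmap ⁻¹' (Prod.snd ⁻¹' s) = s := by
          ext x
          simp [hdmapdef]
        rw [hpre]
        show u p.1 s = u p.2 s
        have h12 : u p.1 = u p.2 := by
          have hp' : EmpAux.sortRep e N p.1 = EmpAux.sortRep e N p.2 := hp
          show EmpAux.permUnif (EmpAux.sortRep e N p.1)
            = EmpAux.permUnif (EmpAux.sortRep e N p.2)
          rw [hp']
        rw [h12]
      · rw [if_neg hp, Kernel.prod_apply, ← Set.univ_prod, Measure.prod_prod]
        have h1' : (κ₁ p) Set.univ = 1 := measure_univ
        rw [h1', one_mul]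
        rfl
    have hlift : ∀ (ρ : Measure (Fin N → E)),
        (∀ σ : Equiv.Perm (Fin N), ρ.map (fun x => x ∘ σ) = ρ) →
        ∀ (s : Set (Fin N → E)), MeasurableSet s →
          ∫⁻ x, u (empMeas x) s ∂ρ = ρ s := by
      intro ρ hρ s hs
      have hpt : ∀ x : Fin N → E, u (empMeas x) s = EmpAux.permUnif x s := by
        intro x
        obtain ⟨σ, hσ⟩ := EmpAux.sortRep_empMeas he x
        have hux : u (empMeas x) = EmpAux.permUnif (EmpAux.sortRep e N (empMeas x)) := rfl
        rw [hux, hσ, EmpAux.permUnif_comp_perm]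
      simp_rw [hpt]
      exact EmpAux.lintegral_permUnif hρ hs
    have hbindfst : (γ.bind (fun p => K p)).map Prod.fst = μ := by
      ext s hs
      have hms : Measurable (fun m : Measure E => u m s) :=
        (Measure.measurable_coe hs).comp hu
      rw [Measure.map_apply measurable_fst hs,
        Measure.bind_apply (measurable_fst hs) (Kernel.measurable K).aemeasurable]
      simp_rw [fun p => hKfst p s hs]
      have hst : ∫⁻ p, u p.1 s ∂γ = ∫⁻ m, u m s ∂(γ.map Prod.fst) := by
        rw [lintegral_map hms measurable_fst]
      rw [hst, h1, lintegral_map hms EmpAux.measurable_empMeas]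
      exact hlift μ hμ s hs
    have hbindsnd : (γ.bind (fun p => K p)).map Prod.snd = ν := by
      ext s hs
      have hms : Measurable (fun m : Measure E => u m s) :=
        (Measure.measurable_coe hs).comp hu
      rw [Measure.map_apply measurable_snd hs,
        Measure.bind_apply (measurable_snd hs) (Kernel.measurable K).aemeasurable]
      simp_rw [fun p => hKsnd p s hs]
      have hst : ∫⁻ p, u p.2 s ∂γ = ∫⁻ m, u m s ∂(γ.map Prod.snd) := by
        rw [lintegral_map hms measurable_snd]
      rw [hst, h2, lintegral_map hms EmpAux.measurable_empMeas]
      exact hlift ν hν s hs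
    have hSne : MeasurableSet {q : (Fin N → E) × (Fin N → E) | q.1 ≠ q.2} := by
      have hd : {q : (Fin N → E) × (Fin N → E) | q.1 ≠ q.2}
          = (Set.diagonal (Fin N → E))ᶜ := rfl
      rw [hd]
      exact (isClosed_diagonal.measurableSet).compl
    refine csInf_le_of_le hbdd2 ⟨γ.bind (fun p => K p), hbindfst, hbindsnd, rfl⟩ ?_
    refine ENNReal.toReal_mono (measure_ne_top γ _) ?_
    rw [Measure.bind_apply hSne (Kernel.measurable K).aemeasurable]
    calc ∫⁻ p, K p {q : (Fin N → E) × (Fin N → E) | q.1 ≠ q.2} ∂γ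
        ≤ ∫⁻ p, Cᶜ.indicator (1 : (Measure E × Measure E) → ℝ≥0∞) p ∂γ := by
          refine lintegral_mono fun p => ?_
          by_cases hp : p ∈ C
          · rw [hKdef, Kernel.piecewise_apply, if_pos hp, Kernel.map_apply κ₁ hdmap,
              Measure.map_apply hdmap hSne]
            have hpre : dmap ⁻¹' {q : (Fin N → E) × (Fin N → E) | q.1 ≠ q.2} = ∅ := by
              ext x
              simp [hdmapdef]
            rw [hpre, measure_empty]
            exact zero_le
          · rw [Set.indicator_of_mem (Set.mem_compl hp)]
            haveI := hKMarkov.isProbabilityMeasure p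
            exact prob_le_one
        _ = γ Cᶜ := lintegral_indicator_one hC.compl
        _ ≤ γ {q : Measure E × Measure E | q.1 ≠ q.2} := by
          refine measure_mono fun p hp => ?_
          simp only [Set.mem_compl_iff, hCdef, Set.mem_setOf_eq] at hp
          simp only [Set.mem_setOf_eq]
          intro hpe
          exact hp (by rw [hpe])
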